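/- For the 2×2 matrix W with rows (0, W₁₂) and (0, W₂₂): there exists a positive diagonal Λ such that 2Λ - ΛW - WᵀΛ ≻ 0 if and only if W₂₂ < 1. -/

import Mathlib

open Matrix

lemma matrix_key (W₁₂ W₂₂ : ℝ) (d : Fin 2 → ℝ) :
    ((2 : ℝ) • Matrix.diagonal d - Matrix.diagonal d * !![0, W₁₂; 0, W₂₂] -
        (!![0, W₁₂; 0, W₂₂])ᵀ * Matrix.diagonal d) =
    !![2 * d 0, -(d 0 * W₁₂); -(d 0 * W₁₂), 2 * d 1 - 2 * (d 1 * W₂₂)] := by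
  have ht : (!![0, W₁₂; 0, W₂₂])ᵀ = !![(0:ℝ), 0; W₁₂, W₂₂] := by
    ext i j; fin_cases i <;> fin_cases j <;> simp
  rw [ht]
  ext i j
  fin_cases i <;> fin_cases j <;>
    simp [Matrix.mul_apply, Fin.sum_univ_two, Matrix.diagonal_apply,
      Matrix.vecMul_diagonal, Matrix.mulVec_diagonal, Fin.ext_iff] <;> ring

lemma quad_form (a b c : ℝ) (x : Fin 2 → ℝ) :
    x ⬝ᵥ (!![a, b; b, c]) *ᵥ x = a * x 0 ^ 2 + 2 * b * x 0 * x 1 + c * x 1 ^ 2 := by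
  simp [dotProduct, Matrix.mulVec, Fin.sum_univ_two, Matrix.vecHead, Matrix.vecTail]
  ring

/-- Example: for `W = [[0, W₁₂], [0, W₂₂]]`, there exists a positive diagonal
`Λ` with `2Λ - ΛW - WᵀΛ ≻ 0` if and only if `W₂₂ < 1`. -/
theorem two_by_two_wellposed_iff (W₁₂ W₂₂ : ℝ) :
    (∃ d : Fin 2 → ℝ, (∀ i, 0 < d i) ∧
      ((2 : ℝ) • Matrix.diagonal d - Matrix.diagonal d * !![0, W₁₂; 0, W₂₂] -
        (!![0, W₁₂; 0, W₂₂])ᵀ * Matrix.diagonal d).PosDef) ↔ W₂₂ < 1 := by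
  constructor
  · rintro ⟨d, hd, hpd⟩
    rw [matrix_key] at hpd
    have hx : (![W₁₂, 2] : Fin 2 → ℝ) ≠ 0 := by
      intro h
      have := congrFun h 1
      norm_num at this
    have h := hpd.dotProduct_mulVec_pos hx
    simp only [RCLike.re_to_real, star_trivial] at h
    rw [quad_form] at h
    simp at h
    have h0 := hd 0
    have h1 := hd 1
    nlinarith [mul_nonneg h0.le (sq_nonneg W₁₂)]
  · intro hW
    refine ⟨![1, (W₁₂ ^ 2 + 1) / (4 * (1 - W₂₂))], ?_, ?_⟩
    · intro i
      fin_cases i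
      · norm_num
      · show (0:ℝ) < (W₁₂ ^ 2 + 1) / (4 * (1 - W₂₂))
        apply div_pos <;> nlinarith [sq_nonneg W₁₂]
    · rw [matrix_key]
      set d1 : ℝ := (W₁₂ ^ 2 + 1) / (4 * (1 - W₂₂)) with hd1def
      have hkey : 2 * d1 - 2 * (d1 * W₂₂) = (W₁₂ ^ 2 + 1) / 2 := by
        have h4 : (1 : ℝ) - W₂₂ ≠ 0 := by linarith
        rw [hd1def]
        field_simp
        ring
      rw [Matrix.posDef_iff_dotProduct_mulVec]
      constructor
      · ext i j
        fin_cases i <;> fin_cases j <;> simp [Matrix.conjTranspose_apply]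
      · intro x hx
        have h0 : x 0 ≠ 0 ∨ x 1 ≠ 0 := by
          by_contra h
          push_neg at h
          apply hx
          ext i
          fin_cases i <;> simp [h.1, h.2]
        show (0:ℝ) < star x ⬝ᵥ _ *ᵥ x
        rw [star_trivial]
        rw [quad_form]
        simp only [Matrix.cons_val_zero, Matrix.cons_val_one, Matrix.head_cons]
        rw [hkey]
        rcases h0 with h0 | h0
        · rcases eq_or_ne (x 1) 0 with h1 | h1
          · rw [h1]; have := sq_pos_of_ne_zero h0; nlinarith
          · nlinarith [sq_nonneg (2 * x 0 - W₁₂ * x 1), sq_pos_of_ne_zero h1]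
        · nlinarith [sq_nonneg (2 * x 0 - W₁₂ * x 1), sq_pos_of_ne_zero h0]
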